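/- Let Δ be a finite set with |Δ| = m ≥ 3, let r ≥ 1, and let Γ be a digraph with vertex set Δ^r. Suppose that every coordinatewise permutation u ↦ (k_1(u_1), …, k_r(u_r)) with k_1, …, k_r ∈ Sym(Δ) is an automorphism of Γ, and that conversely every automorphism of Γ is in product-action form (with arbitrary base entries in Sym(Δ) and arbitrary top element in Sym({1,…,r})). Then the minimal degree of Aut(Γ) equals 2·m^{r−1}, and consequently RelFix(Γ) = 1 − 2/m. In particular, every generalised Hamming graph whose full automorphism group is contained in Sym(Δ) ≀ Sym(r) has relative fixity 1 − 2/m. -/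

import Mathlib

/-- The permutation of Δ^r in product-action form with base k = (k_1,…,k_r) ∈ Sym(Δ)^r and
top h ∈ Sym({1,…,r}): it sends u to the tuple whose i-th entry is k_i(u_{h⁻¹(i)}). -/
def paPerm {Δ : Type*} {r : ℕ} (k : Fin r → Equiv.Perm Δ) (h : Equiv.Perm (Fin r)) :
    Equiv.Perm (Fin r → Δ) where
  toFun u i := k i (u (h⁻¹ i))
  invFun u i := (k (h i))⁻¹ (u (h i))
  left_inv u := by funext i; simp
  right_inv u := by funext i; simp

/-- A permutation `g` of the vertex set is an automorphism of the digraph with arc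
relation `A` if `(u,v)` is an arc iff `(g u, g v)` is an arc. -/
def IsDigraphAut {V : Type*} (A : V → V → Prop) (g : Equiv.Perm V) : Prop :=
  ∀ u v : V, A u v ↔ A (g u) (g v)

/-- The fixity of a digraph: the largest number of vertices fixed by a nontrivial
automorphism (0 if there is none). -/
noncomputable def digraphFixity {V : Type*} (A : V → V → Prop) : ℕ :=
  sSup ((fun g : Equiv.Perm V => Nat.card {v : V // g v = v}) ''
    {g : Equiv.Perm V | IsDigraphAut A g ∧ g ≠ 1})

/-- The minimal degree of the automorphism group of a digraph: the least size of the
support of a nontrivial automorphism. -/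
noncomputable def digraphMinDegree {V : Type*} (A : V → V → Prop) : ℕ :=
  sInf ((fun g : Equiv.Perm V => Nat.card {v : V // g v ≠ v}) ''
    {g : Equiv.Perm V | IsDigraphAut A g ∧ g ≠ 1})

open scoped Classical

lemma paPerm_apply {Δ : Type*} {r : ℕ} (k : Fin r → Equiv.Perm Δ) (h : Equiv.Perm (Fin r))
    (u : Fin r → Δ) (i : Fin r) : paPerm k h u i = k i (u (h⁻¹ i)) := rfl

/-- Splitting `Δ^r` restricted to a condition on coordinate `i₀`. -/
def splitEquiv {Δ : Type*} {r : ℕ} (i₀ : Fin r) (p : Δ → Prop) :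
    {u : Fin r → Δ // p (u i₀)} ≃ {x : Δ // p x} × ({i : Fin r // i ≠ i₀} → Δ) where
  toFun u := (⟨u.1 i₀, u.2⟩, fun i => u.1 i.1)
  invFun x := ⟨fun i => if h : i = i₀ then x.1.1 else x.2 ⟨i, h⟩, by simpa using x.1.2⟩
  left_inv u := by
    apply Subtype.ext
    funext i
    by_cases h : i = i₀ <;> simp [h]
  right_inv x := by
    obtain ⟨⟨y, hy⟩, f⟩ := x
    refine Prod.ext ?_ ?_
    · simp
    · funext i
      simp [i.2]

lemma card_ne2 {Δ : Type*} [Fintype Δ] {a b : Δ} (hab : a ≠ b) :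
    Nat.card {x : Δ // x ≠ a ∧ x ≠ b} = Fintype.card Δ - 2 := by
  rw [Nat.card_eq_fintype_card, Fintype.card_subtype]
  rw [show (Finset.univ.filter fun x : Δ => x ≠ a ∧ x ≠ b) = Finset.univ \ {a, b} by
    ext x; simp [not_or]]
  rw [Finset.card_sdiff, Finset.inter_univ, Finset.card_pair hab, Finset.card_univ]

lemma card_fun_ne {Δ : Type*} [Fintype Δ] {r : ℕ} (i₀ : Fin r) :
    Nat.card ({i : Fin r // i ≠ i₀} → Δ) = Fintype.card Δ ^ (r - 1) := by
  rw [Nat.card_eq_fintype_card, Fintype.card_fun]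
  congr 1
  simp [Fintype.card_subtype_compl]

lemma fix_le {Δ : Type*} [Fintype Δ] (hm : 3 ≤ Fintype.card Δ) {r : ℕ}
    (k : Fin r → Equiv.Perm Δ) (h : Equiv.Perm (Fin r)) (hg : paPerm k h ≠ 1) :
    Nat.card {u : Fin r → Δ // paPerm k h u = u} ≤
      (Fintype.card Δ - 2) * Fintype.card Δ ^ (r - 1) := by
  by_cases hh : h = 1
  · subst hh
    obtain ⟨i₀, hk⟩ : ∃ i₀, k i₀ ≠ 1 := by
      by_contra hc; push_neg at hc
      exact hg (by ext u i; simp [paPerm, hc])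
    obtain ⟨a, ha⟩ : ∃ a, k i₀ a ≠ a := by
      by_contra hc; push_neg at hc
      exact hk (Equiv.ext hc)
    have hfix : ∀ u : {u : Fin r → Δ // paPerm k 1 u = u}, ∀ i, k i (u.1 i) = u.1 i := by
      intro u i
      have := congrFun u.2 i
      simpa [paPerm_apply] using this
    have hbfix : k i₀ (k i₀ a) ≠ k i₀ a := fun hfb => ha ((k i₀).injective hfb)
    have hcond : ∀ u : {u : Fin r → Δ // paPerm k 1 u = u},
        u.1 i₀ ≠ a ∧ u.1 i₀ ≠ k i₀ a := by
      intro u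
      constructor
      · intro hxa
        have := hfix u i₀
        rw [hxa] at this
        exact ha this
      · intro hxb
        have := hfix u i₀
        rw [hxb] at this
        exact hbfix this
    let f : {u : Fin r → Δ // paPerm k 1 u = u} →
        {x : Δ // x ≠ a ∧ x ≠ k i₀ a} × ({i : Fin r // i ≠ i₀} → Δ) := fun u =>
      (⟨u.1 i₀, hcond u⟩, fun i => u.1 i.1)
    have hf : Function.Injective f := by
      intro u v huv
      apply Subtype.ext
      funext i
      by_cases hi : i = i₀
      · subst hi
        exact congrArg Subtype.val (congrArg Prod.fst huv)
      · exact congrFun (congrArg Prod.snd huv) ⟨i, hi⟩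
    calc Nat.card {u : Fin r → Δ // paPerm k 1 u = u}
        ≤ Nat.card ({x : Δ // x ≠ a ∧ x ≠ k i₀ a} × ({i : Fin r // i ≠ i₀} → Δ)) :=
          Nat.card_le_card_of_injective f hf
      _ = (Fintype.card Δ - 2) * Fintype.card Δ ^ (r - 1) := by
          rw [Nat.card_prod, card_ne2 (fun hab => ha hab.symm), card_fun_ne]
  · obtain ⟨i, hi⟩ : ∃ i, h i ≠ i := by
      by_contra hc; push_neg at hc
      exact hh (Equiv.ext hc)
    have hji : h⁻¹ i ≠ i := by
      intro hji
      have : h (h⁻¹ i) = i := by simp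
      rw [hji] at this
      exact hi this
    let f : {u : Fin r → Δ // paPerm k h u = u} → ({i' : Fin r // i' ≠ i} → Δ) :=
      fun u i' => u.1 i'.1
    have hf : Function.Injective f := by
      intro u v huv
      apply Subtype.ext
      funext i'
      by_cases hi' : i' = i
      · subst hi'
        have hu := congrFun u.2 i'
        have hv := congrFun v.2 i'
        rw [paPerm_apply] at hu hv
        rw [← hu, ← hv]
        congr 1
        exact congrFun huv ⟨h⁻¹ i', hji⟩
      · exact congrFun huv ⟨i', hi'⟩
    calc Nat.card {u : Fin r → Δ // paPerm k h u = u}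
        ≤ Nat.card ({i' : Fin r // i' ≠ i} → Δ) := Nat.card_le_card_of_injective f hf
      _ = Fintype.card Δ ^ (r - 1) := card_fun_ne i
      _ ≤ (Fintype.card Δ - 2) * Fintype.card Δ ^ (r - 1) :=
          Nat.le_mul_of_pos_left _ (by omega)

/-- Let Δ be a finite set with |Δ| = m ≥ 3, let r ≥ 1, and let Γ be a digraph
with vertex set Δ^r. Suppose that every coordinatewise permutation
u ↦ (k_1(u_1), …, k_r(u_r)) with k_i ∈ Sym(Δ) is an automorphism of Γ, and that conversely
every automorphism of Γ is in product-action form. Then the minimal degree of Aut(Γ) equals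
2·m^{r−1}, and consequently RelFix(Γ) = 1 − 2/m. In particular, every generalised Hamming
graph whose full automorphism group is contained in Sym(Δ) ≀ Sym(r) has relative fixity
1 − 2/m. -/
theorem stmt_13 {Δ : Type*} [Fintype Δ] (hm : 3 ≤ Fintype.card Δ) (r : ℕ) (hr : 1 ≤ r)
    (A : (Fin r → Δ) → (Fin r → Δ) → Prop)
    (hbase : ∀ k : Fin r → Equiv.Perm Δ, IsDigraphAut A (paPerm k 1))
    (hform : ∀ g : Equiv.Perm (Fin r → Δ), IsDigraphAut A g →
        ∃ (k : Fin r → Equiv.Perm Δ) (h : Equiv.Perm (Fin r)), g = paPerm k h) :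
    digraphMinDegree A = 2 * Fintype.card Δ ^ (r - 1) ∧
    (digraphFixity A : ℝ) / Nat.card (Fin r → Δ) = 1 - 2 / Fintype.card Δ := by
  set m := Fintype.card Δ with hmdef
  set X := m ^ (r - 1) with hXdef
  have hX : 0 < X := pow_pos (by omega) _
  have hpow : m ^ r = m * X := by
    rw [hXdef]
    conv_lhs => rw [show r = 1 + (r - 1) by omega]
    rw [pow_add, pow_one]
  have key : m * X - (m - 2) * X = 2 * X :=
    Nat.sub_eq_of_eq_add (by rw [← add_mul]; congr 1; omega)
  have hcardV : Nat.card (Fin r → Δ) = m * X := by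
    rw [Nat.card_eq_fintype_card, Fintype.card_fun, Fintype.card_fin, hpow]
  have hsupp : ∀ g : Equiv.Perm (Fin r → Δ),
      Nat.card {v : Fin r → Δ // g v ≠ v} = m * X - Nat.card {v : Fin r → Δ // g v = v} := by
    intro g
    simp only [ne_eq]
    rw [Nat.card_eq_fintype_card, Nat.card_eq_fintype_card, Fintype.card_subtype_compl,
      Fintype.card_fun, Fintype.card_fin, hpow]
  have hnt : Nontrivial Δ := Fintype.one_lt_card_iff_nontrivial.mp (by omega)
  obtain ⟨a, b, hab⟩ := exists_pair_ne Δ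
  set i₀ : Fin r := ⟨0, hr⟩ with hi₀
  set k₀ : Fin r → Equiv.Perm Δ := fun i => if i = i₀ then Equiv.swap a b else 1 with hk₀
  have hk₀i₀ : k₀ i₀ = Equiv.swap a b := by simp [hk₀]
  have hg₀aut : IsDigraphAut A (paPerm k₀ 1) := hbase k₀
  have hg₀ne : paPerm k₀ 1 ≠ 1 := by
    intro h1
    have h2 : paPerm k₀ 1 (fun _ => a) i₀ = a := by rw [h1]; rfl
    rw [paPerm_apply] at h2
    simp [hk₀i₀] at h2
    exact hab h2.symm
  have hfixiff : ∀ u : Fin r → Δ, paPerm k₀ 1 u = u ↔ (u i₀ ≠ a ∧ u i₀ ≠ b) := by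
    intro u
    constructor
    · intro hu
      have h1 := congrFun hu i₀
      rw [paPerm_apply] at h1
      simp only [inv_one, Equiv.Perm.one_apply, hk₀i₀] at h1
      constructor
      · intro hxa
        rw [hxa, Equiv.swap_apply_left] at h1
        exact hab h1.symm
      · intro hxb
        rw [hxb, Equiv.swap_apply_right] at h1
        exact hab h1
    · intro hu
      funext i
      rw [paPerm_apply]
      simp only [inv_one, Equiv.Perm.one_apply]
      by_cases hi : i = i₀
      · subst hi
        rw [hk₀i₀]
        exact Equiv.swap_apply_of_ne_of_ne hu.1 hu.2
      · simp [hk₀, hi]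
  have hfixg₀ : Nat.card {u : Fin r → Δ // paPerm k₀ 1 u = u} = (m - 2) * X := by
    have e1 : {u : Fin r → Δ // paPerm k₀ 1 u = u} ≃
        {u : Fin r → Δ // (fun x => x ≠ a ∧ x ≠ b) (u i₀)} :=
      Equiv.subtypeEquivRight (fun u => hfixiff u)
    rw [Nat.card_congr (e1.trans (splitEquiv i₀ (fun x => x ≠ a ∧ x ≠ b))),
      Nat.card_prod, card_ne2 hab, card_fun_ne]
  have hsuppg₀ : Nat.card {v : Fin r → Δ // paPerm k₀ 1 v ≠ v} = 2 * X := by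
    rw [hsupp, hfixg₀, key]
  have hminmem : 2 * X ∈ ((fun g : Equiv.Perm (Fin r → Δ) =>
      Nat.card {v : Fin r → Δ // g v ≠ v}) ''
      {g : Equiv.Perm (Fin r → Δ) | IsDigraphAut A g ∧ g ≠ 1}) :=
    ⟨paPerm k₀ 1, ⟨hg₀aut, hg₀ne⟩, hsuppg₀⟩
  have hfixmem : (m - 2) * X ∈ ((fun g : Equiv.Perm (Fin r → Δ) =>
      Nat.card {v : Fin r → Δ // g v = v}) ''
      {g : Equiv.Perm (Fin r → Δ) | IsDigraphAut A g ∧ g ≠ 1}) :=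
    ⟨paPerm k₀ 1, ⟨hg₀aut, hg₀ne⟩, hfixg₀⟩
  have hminbd : ∀ n ∈ ((fun g : Equiv.Perm (Fin r → Δ) =>
      Nat.card {v : Fin r → Δ // g v ≠ v}) ''
      {g : Equiv.Perm (Fin r → Δ) | IsDigraphAut A g ∧ g ≠ 1}), 2 * X ≤ n := by
    rintro n ⟨g, ⟨hgaut, hgne⟩, rfl⟩
    obtain ⟨k, h, rfl⟩ := hform g hgaut
    have hle := fix_le hm k h hgne
    show 2 * X ≤ Nat.card {v : Fin r → Δ // paPerm k h v ≠ v}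
    rw [hsupp, ← key]
    exact Nat.sub_le_sub_left hle _
  have hfixbd : ∀ n ∈ ((fun g : Equiv.Perm (Fin r → Δ) =>
      Nat.card {v : Fin r → Δ // g v = v}) ''
      {g : Equiv.Perm (Fin r → Δ) | IsDigraphAut A g ∧ g ≠ 1}), n ≤ (m - 2) * X := by
    rintro n ⟨g, ⟨hgaut, hgne⟩, rfl⟩
    obtain ⟨k, h, rfl⟩ := hform g hgaut
    show Nat.card {v : Fin r → Δ // paPerm k h v = v} ≤ (m - 2) * X
    exact fix_le hm k h hgne
  have hmin : digraphMinDegree A = 2 * X :=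
    le_antisymm (Nat.sInf_le hminmem) (le_csInf ⟨_, hminmem⟩ hminbd)
  have hfixity : digraphFixity A = (m - 2) * X :=
    le_antisymm (csSup_le ⟨_, hfixmem⟩ hfixbd) (le_csSup ⟨(m - 2) * X, hfixbd⟩ hfixmem)
  refine ⟨hmin, ?_⟩
  rw [hfixity, hcardV]
  have hm0 : (m : ℝ) ≠ 0 := Nat.cast_ne_zero.mpr (by omega)
  have hX0 : (X : ℝ) ≠ 0 := Nat.cast_ne_zero.mpr (by omega)
  rw [Nat.cast_mul, Nat.cast_mul, Nat.cast_sub (by omega : 2 ≤ m)]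
  field_simp
  ring
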